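/- Let G be a finite simple graph, let M be the output matching of a 1-2-MinGreedy execution on G, and let M* be a maximum matching of G in normal form with respect to M. Then every endpoint w of an M-augmenting path of (V, M ∪ M*) is the target of at least one transfer; consequently every M-augmenting path X satisfies c_X ≥ 2. -/

import Mathlib

namespace MinGreedy

noncomputable section

open SimpleGraph

/-- The degree of a vertex `x` in the graph `H`. -/
def deg {V : Type} (H : SimpleGraph V) (x : V) : ℕ :=
  (H.neighborSet x).ncard

/-- `M` is a matching of `G`, given as a set of pairwise disjoint edges of `G`. -/
def IsMatchingSet {V : Type} (G : SimpleGraph V) (M : Set (Sym2 V)) : Prop :=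
  M ⊆ G.edgeSet ∧ ∀ e ∈ M, ∀ f ∈ M, e ≠ f → ∀ x : V, x ∈ e → x ∉ f

/-- `M` is a maximum matching of `G`. -/
def IsMaxMatchingSet {V : Type} (G : SimpleGraph V) (M : Set (Sym2 V)) : Prop :=
  IsMatchingSet G M ∧ ∀ N : Set (Sym2 V), IsMatchingSet G N → N.ncard ≤ M.ncard

/-- `ν G`, the maximum size of a matching of `G`. -/
def nu {V : Type} (G : SimpleGraph V) : ℕ :=
  sSup {n | ∃ M : Set (Sym2 V), IsMatchingSet G M ∧ M.ncard = n}

/-- `G` has maximum degree at most `Δ`. -/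
def maxDegLE {V : Type} (G : SimpleGraph V) (Δ : ℕ) : Prop :=
  ∀ x : V, deg G x ≤ Δ

/-- An execution of a greedy matching algorithm on `G`: in step `i` (`0 ≤ i < k`) the
edge `{sel i, oth i}` of `Gs i` is picked with selected vertex `sel i`, and `Gs (i+1)`
is obtained from `Gs i` by deleting all edges incident with `sel i` or `oth i`;
at the end `Gs k` has no edges. -/
structure GreedyExec (V : Type) (G : SimpleGraph V) where
  k : ℕ
  Gs : ℕ → SimpleGraph V
  sel : ℕ → V
  oth : ℕ → V
  init : Gs 0 = G
  adj : ∀ i < k, (Gs i).Adj (sel i) (oth i)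
  step : ∀ i < k, Gs (i + 1) =
    SimpleGraph.fromEdgeSet {e | e ∈ (Gs i).edgeSet ∧ sel i ∉ e ∧ oth i ∉ e}
  final : (Gs k).edgeSet = ∅

/-- The output matching `M = {e_1, …, e_k}` of an execution. -/
def GreedyExec.M {V : Type} {G : SimpleGraph V} (E : GreedyExec V G) : Set (Sym2 V) :=
  {e | ∃ i < E.k, e = s(E.sel i, E.oth i)}

/-- The execution is a MinGreedy execution: in each step the selected vertex has
minimum positive degree in the current graph. -/
def GreedyExec.IsMinGreedy {V : Type} {G : SimpleGraph V} (E : GreedyExec V G) : Prop :=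
  ∀ i < E.k, ∀ x : V, 0 < deg (E.Gs i) x → deg (E.Gs i) (E.sel i) ≤ deg (E.Gs i) x

/-- The execution is a 1-2-MinGreedy execution: whenever the current graph has a vertex of
degree 1 or 2, the selected vertex has minimum positive degree in the current graph. -/
def GreedyExec.Is12MinGreedy {V : Type} {G : SimpleGraph V} (E : GreedyExec V G) : Prop :=
  ∀ i < E.k, (∃ x : V, deg (E.Gs i) x = 1 ∨ deg (E.Gs i) x = 2) →
    ∀ x : V, 0 < deg (E.Gs i) x → deg (E.Gs i) (E.sel i) ≤ deg (E.Gs i) x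

/-- `p 0, p 1, …, p (2m+1)` is an `M`-augmenting path: an `M`-alternating path whose
first and last edges lie in `Mopt` and whose two endpoints `p 0` and `p (2m+1)` are
not covered by `M`; it has `m` edges of `M` and `m+1` edges of `Mopt`. -/
def IsAugPath {V : Type} (M Mopt : Set (Sym2 V)) (m : ℕ) (p : ℕ → V) : Prop :=
  (∀ i ≤ 2 * m + 1, ∀ j ≤ 2 * m + 1, p i = p j → i = j) ∧
  (∀ j ≤ 2 * m, (j % 2 = 0 → s(p j, p (j + 1)) ∈ Mopt) ∧
                (j % 2 = 1 → s(p j, p (j + 1)) ∈ M)) ∧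
  (∀ e ∈ M, p 0 ∉ e ∧ p (2 * m + 1) ∉ e)

/-- The vertex set of the path `p 0, …, p (2m+1)`. -/
def pathSupp {V : Type} (m : ℕ) (p : ℕ → V) : Set V := p '' {j | j ≤ 2 * m + 1}

/-- `w` is an endpoint of an `M`-augmenting path of the graph `(V, M ∪ Mopt)`. -/
def IsPathEndpoint {V : Type} (M Mopt : Set (Sym2 V)) (w : V) : Prop :=
  ∃ m p, IsAugPath M Mopt m p ∧ (w = p 0 ∨ w = p (2 * m + 1))

/-- `S` is the vertex set of a singleton component: a single edge of `M ∩ Mopt`. -/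
def IsSingletonComp {V : Type} (M Mopt : Set (Sym2 V)) (S : Set V) : Prop :=
  ∃ x y : V, x ≠ y ∧ s(x, y) ∈ M ∧ s(x, y) ∈ Mopt ∧ S = ({x, y} : Set V)

/-- `Mopt` is a maximum matching of `G` in normal form with respect to `M`: every
(nontrivial) connected component of the graph `(V, M ∪ Mopt)` is a singleton
(a single edge of `M ∩ Mopt`) or an `M`-augmenting path. -/
def NormalForm {V : Type} (G : SimpleGraph V) (M Mopt : Set (Sym2 V)) : Prop :=
  IsMaxMatchingSet G Mopt ∧
  ∀ C : (SimpleGraph.fromEdgeSet (M ∪ Mopt)).ConnectedComponent,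
    2 ≤ C.supp.ncard →
    IsSingletonComp M Mopt C.supp ∨
    ∃ m p, IsAugPath M Mopt m p ∧ C.supp = pathSupp m p

/-- `{x, y}` is an edge of `F = E ∖ (M ∪ Mopt)`. -/
def FEdge {V : Type} (G : SimpleGraph V) (M Mopt : Set (Sym2 V)) (x y : V) : Prop :=
  s(x, y) ∈ G.edgeSet ∧ s(x, y) ∉ M ∧ s(x, y) ∉ Mopt

/-- The number of `F`-edges incident with `x`. -/
def Fdeg {V : Type} (G : SimpleGraph V) (M Mopt : Set (Sym2 V)) (x : V) : ℕ :=
  {e : Sym2 V | e ∈ G.edgeSet ∧ e ∉ M ∧ e ∉ Mopt ∧ x ∈ e}.ncard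

/-- `x` is matched at step `i` of the execution, i.e. `x ∈ e_i`. -/
def matchedAt {V : Type} {G : SimpleGraph V} (E : GreedyExec V G) (i : ℕ) (x : V) : Prop :=
  i < E.k ∧ (x = E.sel i ∨ x = E.oth i)

/-- The `F`-edge `{v, w}` is a transfer from `v` to `w` arising at step `i`: `w` is an
endpoint of an `M`-augmenting path, `v` is matched at step `i` and the degree of `w`
in the graph after step `i` is at most 1. -/
def transferAt {V : Type} {G : SimpleGraph V} (E : GreedyExec V G)
    (M Mopt : Set (Sym2 V)) (i : ℕ) (v w : V) : Prop :=
  FEdge G M Mopt v w ∧ IsPathEndpoint M Mopt w ∧ matchedAt E i v ∧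
  deg (E.Gs (i + 1)) w ≤ 1

/-- The edge `{v, w}` is a transfer from `v` to `w`. -/
def IsTransfer {V : Type} {G : SimpleGraph V} (E : GreedyExec V G)
    (M Mopt : Set (Sym2 V)) (v w : V) : Prop :=
  ∃ i, transferAt E M Mopt i v w

/-- `(v, w)` is an uncanceled transfer arising at step `i`: it is a transfer arising at
step `i` and it is not the case that (`w` has degree exactly 1 before step `i` with its
unique incident edge being `{v, w}`, and `w` is the target of at least two uncanceled
transfers arising at steps before `i`). -/
def uncanceledAt {V : Type} {G : SimpleGraph V} (E : GreedyExec V G)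
    (M Mopt : Set (Sym2 V)) (i : ℕ) : V → V → Prop :=
  Nat.strongRecOn (motive := fun _ => V → V → Prop) i (fun i ih v w =>
    transferAt E M Mopt i v w ∧
    ¬(deg (E.Gs i) w = 1 ∧ (E.Gs i).Adj v w ∧
      ∃ (j₁ : ℕ) (h₁ : j₁ < i) (v₁ : V) (j₂ : ℕ) (h₂ : j₂ < i) (v₂ : V),
        ih j₁ h₁ v₁ w ∧ ih j₂ h₂ v₂ w ∧ (j₁, v₁) ≠ (j₂, v₂)))

/-- `(v, w)` is an uncanceled transfer. -/
def IsUncanceledTransfer {V : Type} {G : SimpleGraph V} (E : GreedyExec V G)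
    (M Mopt : Set (Sym2 V)) (v w : V) : Prop :=
  ∃ i, uncanceledAt E M Mopt i v w

/-- `(v, w)` is a canceled transfer. -/
def IsCanceledTransfer {V : Type} {G : SimpleGraph V} (E : GreedyExec V G)
    (M Mopt : Set (Sym2 V)) (v w : V) : Prop :=
  IsTransfer E M Mopt v w ∧ ¬IsUncanceledTransfer E M Mopt v w

/-- `d_X`: the number of transfers whose source lies in the vertex set `X`. -/
def debits {V : Type} {G : SimpleGraph V} (E : GreedyExec V G)
    (M Mopt : Set (Sym2 V)) (X : Set V) : ℕ :=
  {q : V × V | IsTransfer E M Mopt q.1 q.2 ∧ q.1 ∈ X}.ncard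

/-- `c_X`: the number of transfers whose target lies in the vertex set `X`. -/
def credits {V : Type} {G : SimpleGraph V} (E : GreedyExec V G)
    (M Mopt : Set (Sym2 V)) (X : Set V) : ℕ :=
  {q : V × V | IsTransfer E M Mopt q.1 q.2 ∧ q.2 ∈ X}.ncard

/-- `i` is the creation step of the component with vertex set `X`: the step in which the
first edge of `M` lying in `X` is picked. -/
def creationStep {V : Type} {G : SimpleGraph V} (E : GreedyExec V G)
    (X : Set V) (i : ℕ) : Prop :=
  i < E.k ∧ E.sel i ∈ X ∧ E.oth i ∈ X ∧ ∀ j < i, ¬(E.sel j ∈ X ∧ E.oth j ∈ X)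

/-- A degree-1 endpoint exists after the creation step `i`: some transfer with source
`sel i` or `oth i` targets an endpoint `w` of degree exactly 1 after step `i`. -/
def Deg1EndpointAfter {V : Type} {G : SimpleGraph V} (E : GreedyExec V G)
    (M Mopt : Set (Sym2 V)) (i : ℕ) : Prop :=
  ∃ v w : V, (v = E.sel i ∨ v = E.oth i) ∧ transferAt E M Mopt i v w ∧
    deg (E.Gs (i + 1)) w = 1
variable {V : Type} {G : SimpleGraph V}

lemma gs_edge_iff (E : GreedyExec V G) :
    ∀ j, j ≤ E.k → ∀ e, (e ∈ (E.Gs j).edgeSet ↔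
      e ∈ G.edgeSet ∧ ∀ t < j, E.sel t ∉ e ∧ E.oth t ∉ e) := by
  intro j
  induction j with
  | zero => intro _ e; rw [E.init]; simp
  | succ n ih =>
    intro hj e
    have hn : n < E.k := hj
    rw [E.step n hn, edgeSet_fromEdgeSet]
    constructor
    · rintro ⟨⟨he, hs, ho⟩, _⟩
      obtain ⟨hG, hall⟩ := (ih hn.le e).mp he
      refine ⟨hG, fun t ht => ?_⟩
      rcases Nat.lt_succ_iff_lt_or_eq.mp ht with h | h
      · exact hall t h
      · subst h; exact ⟨hs, ho⟩
    · rintro ⟨hG, hall⟩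
      have he : e ∈ (E.Gs n).edgeSet :=
        (ih hn.le e).mpr ⟨hG, fun t ht => hall t (ht.trans (Nat.lt_succ_self n))⟩
      exact ⟨⟨he, (hall n (Nat.lt_succ_self n)).1, (hall n (Nat.lt_succ_self n)).2⟩,
        G.not_isDiag_of_mem_edgeSet hG⟩

lemma matched_once (E : GreedyExec V G) {t1 t2 : ℕ} {x : V}
    (h1 : t1 < E.k) (h2 : t2 < E.k)
    (m1 : x = E.sel t1 ∨ x = E.oth t1) (m2 : x = E.sel t2 ∨ x = E.oth t2) :
    t1 = t2 := by
  have key : ∀ s1 s2 : ℕ, s1 < s2 → s2 < E.k →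
      (x = E.sel s1 ∨ x = E.oth s1) → (x = E.sel s2 ∨ x = E.oth s2) → False := by
    intro s1 s2 hlt hk n1 n2
    have hadj := E.adj s2 hk
    have he : s(E.sel s2, E.oth s2) ∈ (E.Gs s2).edgeSet := hadj
    have hch := ((gs_edge_iff E s2 hk.le _).mp he).2 s1 hlt
    have hxmem : x ∈ s(E.sel s2, E.oth s2) := Sym2.mem_iff.mpr n2
    rcases n1 with h | h
    · exact hch.1 (h ▸ hxmem)
    · exact hch.2 (h ▸ hxmem)
  rcases lt_trichotomy t1 t2 with h | h | h
  · exact absurd (key t1 t2 h h2 m1 m2) (by simp)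
  · exact h
  · exact absurd (key t2 t1 h h1 m2 m1) (by simp)

lemma edge_gone (E : GreedyExec V G) {j : ℕ} {x y : V} (hj : j ≤ E.k)
    (hG : s(x, y) ∈ G.edgeSet) (habs : s(x, y) ∉ (E.Gs j).edgeSet) :
    ∃ t, t < j ∧ ((x = E.sel t ∨ x = E.oth t) ∨ (y = E.sel t ∨ y = E.oth t)) := by
  by_contra h
  push_neg at h
  apply habs
  rw [gs_edge_iff E j hj]
  refine ⟨hG, fun t ht => ⟨fun hmem => ?_, fun hmem => ?_⟩⟩
  · rcases Sym2.mem_iff.mp hmem with h' | h'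
    · exact ((h t ht).1.1 h'.symm)
    · exact ((h t ht).2.1 h'.symm)
  · rcases Sym2.mem_iff.mp hmem with h' | h'
    · exact ((h t ht).1.2 h'.symm)
    · exact ((h t ht).2.2 h'.symm)

lemma edge_present (E : GreedyExec V G) {j : ℕ} {x y : V} (hj : j ≤ E.k)
    (hG : s(x, y) ∈ G.edgeSet)
    (hx : ∀ t < j, ¬(x = E.sel t ∨ x = E.oth t))
    (hy : ∀ t < j, ¬(y = E.sel t ∨ y = E.oth t)) :
    s(x, y) ∈ (E.Gs j).edgeSet := by
  rw [gs_edge_iff E j hj]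
  refine ⟨hG, fun t ht => ⟨fun hmem => ?_, fun hmem => ?_⟩⟩
  · rcases Sym2.mem_iff.mp hmem with h' | h'
    · exact hx t ht (Or.inl h'.symm)
    · exact hy t ht (Or.inl h'.symm)
  · rcases Sym2.mem_iff.mp hmem with h' | h'
    · exact hx t ht (Or.inr h'.symm)
    · exact hy t ht (Or.inr h'.symm)

lemma deg_pos {H : SimpleGraph V} {x y : V} [Fintype V] (h : H.Adj x y) : 0 < deg H x :=
  (Set.ncard_pos (Set.toFinite _)).mpr ⟨y, h⟩

lemma two_le_deg {H : SimpleGraph V} {x y z : V} [Fintype V]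
    (h1 : H.Adj x y) (h2 : H.Adj x z) (hne : y ≠ z) : 2 ≤ deg H x :=
  (Set.one_lt_ncard (Set.toFinite _)).mpr ⟨y, h1, z, h2, hne⟩

lemma deg_le_one {H : SimpleGraph V} {x b : V} [Fintype V]
    (h : H.neighborSet x ⊆ {b}) : deg H x ≤ 1 := by
  have := Set.ncard_le_ncard h (Set.finite_singleton b)
  rw [Set.ncard_singleton] at this; exact this

lemma neighbor_eq_of_deg_one {H : SimpleGraph V} {x y z : V} [Fintype V]
    (hd : deg H x = 1) (hy : H.Adj x y) (hz : H.Adj x z) : y = z := by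
  obtain ⟨a, ha⟩ := Set.ncard_eq_one.mp hd
  have h1 : y ∈ H.neighborSet x := hy
  have h2 : z ∈ H.neighborSet x := hz
  rw [ha] at h1 h2
  simp at h1 h2
  exact h1.trans h2.symm


lemma aug_path_transfer [Fintype V] (E : GreedyExec V G) (h12 : E.Is12MinGreedy)
    (Mopt : Set (Sym2 V)) (hMopt : IsMatchingSet G Mopt)
    (m : ℕ) (p : ℕ → V) (hp : IsAugPath E.M Mopt m p) :
    ∃ v : V, IsTransfer E E.M Mopt v (p 0) := by
  classical
  by_contra hno
  push_neg at hno
  obtain ⟨hinj, hedge, hend⟩ := hp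
  have hnoT : ∀ v t, ¬ transferAt E E.M Mopt t v (p 0) := by
    intro v t ht; exact hno v ⟨t, ht⟩
  have ha : ∀ t, t < E.k → ¬(p 0 = E.sel t ∨ p 0 = E.oth t) := by
    intro t ht hm
    exact (hend _ ⟨t, ht, rfl⟩).1 (Sym2.mem_iff.mpr hm)
  have hne' : ∀ i1 j1, i1 ≤ 2 * m + 1 → j1 ≤ 2 * m + 1 → i1 ≠ j1 → p i1 ≠ p j1 := by
    intro i1 j1 h1 h2 h3 h; exact h3 (hinj i1 h1 j1 h2 h)
  have hab : s(p 0, p 1) ∈ Mopt := by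
    have h := (hedge 0 (by omega)).1 (by norm_num)
    rwa [show (0 : ℕ) + 1 = 1 from by norm_num] at h
  have habG : s(p 0, p 1) ∈ G.edgeSet := hMopt.1 hab
  have habs : s(p 0, p 1) ∉ (E.Gs E.k).edgeSet := by
    rw [E.final]; exact Set.notMem_empty _
  obtain ⟨i, hik, hcase⟩ := edge_gone E le_rfl habG habs
  have hbi : p 1 = E.sel i ∨ p 1 = E.oth i := by
    rcases hcase with h | h
    · exact absurd h (ha i hik)
    · exact h
  rcases Nat.eq_zero_or_pos m with hm0 | hm
  · have h2 := (hend _ ⟨i, hik, rfl⟩).2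
    subst hm0
    norm_num at h2
    rcases hbi with h | h
    · exact h2.1 h
    · exact h2.2 h
  have h01 : p 0 ≠ p 1 := hne' 0 1 (by omega) (by omega) (by omega)
  have mkT : ∀ v t, t < E.k → (v = E.sel t ∨ v = E.oth t) → G.Adj (p 0) v →
      s(p 0, v) ∉ Mopt → deg (E.Gs (t + 1)) (p 0) ≤ 1 → False := by
    intro v t ht hv hadj hnM hdeg
    refine hnoT v t ⟨⟨?_, ?_, ?_⟩, ⟨m, p, ⟨hinj, hedge, hend⟩, Or.inl rfl⟩, ⟨ht, hv⟩, hdeg⟩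
    · rw [Sym2.eq_swap]; exact (SimpleGraph.mem_edgeSet _).mpr hadj
    · intro hM; exact (hend _ hM).1 (Sym2.mem_iff.mpr (Or.inr rfl))
    · rw [Sym2.eq_swap]; exact hnM
  -- `p 0` has no `G`-neighbor besides `p 1`
  have hN : ∀ x, G.Adj (p 0) x → x = p 1 := by
    by_contra hx
    push_neg at hx
    obtain ⟨x0, hx0adj, hx0ne⟩ := hx
    set P : ℕ → Prop := fun t => t < E.k ∧
      ∃ x, G.Adj (p 0) x ∧ x ≠ p 1 ∧ (x = E.sel t ∨ x = E.oth t) with hPdef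
    have hx0G : s(p 0, x0) ∈ G.edgeSet := (SimpleGraph.mem_edgeSet _).mpr hx0adj
    have hx0abs : s(p 0, x0) ∉ (E.Gs E.k).edgeSet := by
      rw [E.final]; exact Set.notMem_empty _
    obtain ⟨t0, ht0, hc0⟩ := edge_gone E le_rfl hx0G hx0abs
    have hc0' : x0 = E.sel t0 ∨ x0 = E.oth t0 := by
      rcases hc0 with h | h
      · exact absurd h (ha t0 ht0)
      · exact h
    have hP0 : P t0 := ⟨ht0, x0, hx0adj, hx0ne, hc0'⟩
    have hPt1 : P (Nat.findGreatest P E.k) := Nat.findGreatest_spec ht0.le hP0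
    set t1 := Nat.findGreatest P E.k with ht1def
    obtain ⟨ht1k, v', hv'adj, hv'ne, hv'm⟩ := hPt1
    have hsub : (E.Gs (t1 + 1)).neighborSet (p 0) ⊆ {p 1} := by
      intro u hu
      rw [SimpleGraph.mem_neighborSet] at hu
      have hue : s(p 0, u) ∈ (E.Gs (t1 + 1)).edgeSet := (SimpleGraph.mem_edgeSet _).mpr hu
      have hchar := (gs_edge_iff E (t1 + 1) (Nat.succ_le_of_lt ht1k) _).mp hue
      by_contra hub
      have hub' : u ≠ p 1 := by simpa using hub
      have huabs : s(p 0, u) ∉ (E.Gs E.k).edgeSet := by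
        rw [E.final]; exact Set.notMem_empty _
      obtain ⟨tu, htu, hcu⟩ := edge_gone E le_rfl hchar.1 huabs
      have hcu' : u = E.sel tu ∨ u = E.oth tu := by
        rcases hcu with h | h
        · exact absurd h (ha tu htu)
        · exact h
      have hPtu : P tu := ⟨htu, u, (SimpleGraph.mem_edgeSet _).mp hchar.1, hub', hcu'⟩
      have hle : tu ≤ t1 := Nat.le_findGreatest htu.le hPtu
      have hch2 := hchar.2 tu (by omega)
      rcases hcu' with h | h
      · exact hch2.1 (by rw [← h]; exact Sym2.mem_iff.mpr (Or.inr rfl))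
      · exact hch2.2 (by rw [← h]; exact Sym2.mem_iff.mpr (Or.inr rfl))
    refine mkT v' t1 ht1k hv'm hv'adj ?_ (deg_le_one hsub)
    intro hmem
    have hedne : (s(p 0, v') : Sym2 V) ≠ s(p 0, p 1) := by
      intro h
      rcases Sym2.eq_iff.mp h with ⟨_, h2⟩ | ⟨h1, _⟩
      · exact hv'ne h2
      · exact h01 h1
    exact (hMopt.2 _ hmem _ hab hedne (p 0) (Sym2.mem_iff.mpr (Or.inl rfl)))
      (Sym2.mem_iff.mpr (Or.inl rfl))
  -- the step `i` matches `p 1` with `p 2`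
  have hM1 : s(p 1, p 2) ∈ E.M := by
    have h := (hedge 1 (by omega)).2 (by norm_num)
    rwa [show (1 : ℕ) + 1 = 2 from by norm_num] at h
  obtain ⟨j, hjk, hje⟩ := hM1
  have hbj : p 1 = E.sel j ∨ p 1 = E.oth j := by
    have h : p 1 ∈ s(E.sel j, E.oth j) := by
      rw [← hje]; exact Sym2.mem_iff.mpr (Or.inl rfl)
    exact Sym2.mem_iff.mp h
  have hji : j = i := matched_once E hjk hik hbj hbi
  have hei : s(p 1, p 2) = s(E.sel i, E.oth i) := by rw [← hji]; exact hje
  have honly : ∀ t, t < E.k → (p 1 = E.sel t ∨ p 1 = E.oth t) → t = i :=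
    fun t ht hm => matched_once E ht hik hm hbi
  -- the neighborhood of `p 0` is `{p 1}` up to step `i`
  have hnbhd : ∀ j', j' ≤ i → (E.Gs j').neighborSet (p 0) = {p 1} := by
    intro j' hj'
    apply Set.eq_singleton_iff_unique_mem.mpr
    constructor
    · rw [SimpleGraph.mem_neighborSet, ← SimpleGraph.mem_edgeSet]
      apply edge_present E (by omega) habG
      · intro t ht; exact ha t (by omega)
      · intro t ht hm
        have := honly t (by omega) hm
        omega
    · intro u hu
      rw [SimpleGraph.mem_neighborSet] at hu
      have hue : s(p 0, u) ∈ (E.Gs j').edgeSet := (SimpleGraph.mem_edgeSet _).mpr hu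
      exact hN u ((SimpleGraph.mem_edgeSet _).mp ((gs_edge_iff E j' (by omega) _).mp hue).1)
  have hdeg1 : ∀ j', j' ≤ i → deg (E.Gs j') (p 0) = 1 := by
    intro j' hj'
    rw [deg, hnbhd j' hj', Set.ncard_singleton]
  have hselD : ∀ t, t < E.k → t ≤ i → deg (E.Gs t) (E.sel t) = 1 := by
    intro t ht hti
    have hgr := h12 t ht ⟨p 0, Or.inl (hdeg1 t hti)⟩
    have h1 : deg (E.Gs t) (E.sel t) ≤ deg (E.Gs t) (p 0) :=
      hgr (p 0) (by rw [hdeg1 t hti]; omega)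
    have h2 : 0 < deg (E.Gs t) (E.sel t) := deg_pos (E.adj t ht)
    have h3 := hdeg1 t hti
    omega
  have hadj01 : (E.Gs i).Adj (p 0) (p 1) := by
    have h : p 1 ∈ (E.Gs i).neighborSet (p 0) := by
      rw [hnbhd i le_rfl]; exact Set.mem_singleton _
    rwa [SimpleGraph.mem_neighborSet] at h
  have hseli : E.sel i = p 2 ∧ E.oth i = p 1 := by
    rcases Sym2.eq_iff.mp hei with ⟨h1, h2⟩ | ⟨h1, h2⟩
    · exfalso
      have hadj_b_oth : (E.Gs i).Adj (p 1) (E.oth i) := by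
        rw [h1]; exact E.adj i hik
      have h2le : 2 ≤ deg (E.Gs i) (p 1) :=
        two_le_deg hadj_b_oth hadj01.symm
          (by rw [← h2]; exact hne' 2 0 (by omega) (by omega) (by omega))
      have hs1 := hselD i hik le_rfl
      rw [← h1] at hs1
      omega
    · exact ⟨h2.symm, h1.symm⟩
  -- chain down the path
  have chain : ∀ d, d + 1 ≤ m → ∃ t t', t < E.k ∧ t ≤ i ∧
      E.sel t = p (2 * d + 2) ∧ E.oth t = p (2 * d + 1) ∧
      t' < t ∧ (p (2 * d + 3) = E.sel t' ∨ p (2 * d + 3) = E.oth t') := by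
    intro d
    induction d with
    | zero =>
      intro _
      have hd2 : deg (E.Gs i) (p 2) = 1 := by rw [← hseli.1]; exact hselD i hik le_rfl
      have hadj21 : (E.Gs i).Adj (p 2) (p 1) := by
        rw [← hseli.1, ← hseli.2]; exact E.adj i hik
      have hMopt23 : s(p 2, p 3) ∈ Mopt := by
        have h := (hedge 2 (by omega)).1 (by norm_num)
        rwa [show (2 : ℕ) + 1 = 3 from by norm_num] at h
      have habs23 : s(p 2, p 3) ∉ (E.Gs i).edgeSet := by
        intro hmem
        have hadj23 : (E.Gs i).Adj (p 2) (p 3) := (SimpleGraph.mem_edgeSet _).mp hmem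
        exact hne' 1 3 (by omega) (by omega) (by omega)
          (neighbor_eq_of_deg_one hd2 hadj21 hadj23)
      obtain ⟨t', ht'i, hc⟩ := edge_gone E hik.le (hMopt.1 hMopt23) habs23
      have hc' : p 3 = E.sel t' ∨ p 3 = E.oth t' := by
        rcases hc with h | h
        · exfalso
          have := matched_once E (lt_trans ht'i hik) hik h (Or.inl hseli.1.symm)
          omega
        · exact h
      refine ⟨i, t', hik, le_rfl, ?_, ?_, ht'i, ?_⟩
      · rw [show 2 * 0 + 2 = 2 from by norm_num]; exact hseli.1
      · rw [show 2 * 0 + 1 = 1 from by norm_num]; exact hseli.2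
      · rw [show 2 * 0 + 3 = 3 from by norm_num]; exact hc'
    | succ n ih =>
      intro hd
      obtain ⟨t, t', htk, hti, hsel_t, hoth_t, ht't, hq⟩ := ih (by omega)
      have ht'k : t' < E.k := lt_trans ht't htk
      have ht'i : t' ≤ i := le_trans ht't.le hti
      have hM34 : s(p (2 * n + 3), p (2 * n + 4)) ∈ E.M := by
        have h := (hedge (2 * n + 3) (by omega)).2 (by omega)
        rwa [show 2 * n + 3 + 1 = 2 * n + 4 from by omega] at h
      obtain ⟨j2, hj2k, hj2e⟩ := hM34
      have hq' : p (2 * n + 3) = E.sel j2 ∨ p (2 * n + 3) = E.oth j2 := by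
        have h : p (2 * n + 3) ∈ s(E.sel j2, E.oth j2) := by
          rw [← hj2e]; exact Sym2.mem_iff.mpr (Or.inl rfl)
        exact Sym2.mem_iff.mp h
      have hj2t' : j2 = t' := matched_once E hj2k ht'k hq' hq
      have hei' : s(p (2 * n + 3), p (2 * n + 4)) = s(E.sel t', E.oth t') := by
        rw [← hj2t']; exact hj2e
      have honly2 : ∀ u, u < E.k → (p (2 * n + 2) = E.sel u ∨ p (2 * n + 2) = E.oth u) →
          u = t := fun u hu hm => matched_once E hu htk hm (Or.inl hsel_t.symm)
      have hMopt23 : s(p (2 * n + 2), p (2 * n + 3)) ∈ Mopt := by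
        have h := (hedge (2 * n + 2) (by omega)).1 (by omega)
        rwa [show 2 * n + 2 + 1 = 2 * n + 3 from by omega] at h
      have hpres : s(p (2 * n + 2), p (2 * n + 3)) ∈ (E.Gs t').edgeSet := by
        apply edge_present E ht'k.le (hMopt.1 hMopt23)
        · intro u hu hm
          have := honly2 u (by omega) hm
          omega
        · intro u hu hm
          have := matched_once E (by omega : u < E.k) ht'k hm hq
          omega
      have hadj23 : (E.Gs t').Adj (p (2 * n + 2)) (p (2 * n + 3)) :=
        (SimpleGraph.mem_edgeSet _).mp hpres
      have hselD' := hselD t' ht'k ht'i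
      have hsel' : E.sel t' = p (2 * n + 4) ∧ E.oth t' = p (2 * n + 3) := by
        rcases Sym2.eq_iff.mp hei' with ⟨h1, h2⟩ | ⟨h1, h2⟩
        · exfalso
          have hadj34 : (E.Gs t').Adj (p (2 * n + 3)) (E.oth t') := by
            rw [h1]; exact E.adj t' ht'k
          have h2le : 2 ≤ deg (E.Gs t') (p (2 * n + 3)) :=
            two_le_deg hadj34 hadj23.symm
              (by rw [← h2]
                  exact hne' (2 * n + 4) (2 * n + 2) (by omega) (by omega) (by omega))
          rw [← h1] at hselD'
          omega
        · exact ⟨h2.symm, h1.symm⟩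
      have hd4 : deg (E.Gs t') (p (2 * n + 4)) = 1 := by rw [← hsel'.1]; exact hselD'
      have hadj43 : (E.Gs t').Adj (p (2 * n + 4)) (p (2 * n + 3)) := by
        rw [← hsel'.1, ← hsel'.2]; exact E.adj t' ht'k
      have hMopt45 : s(p (2 * n + 4), p (2 * n + 5)) ∈ Mopt := by
        have h := (hedge (2 * n + 4) (by omega)).1 (by omega)
        rwa [show 2 * n + 4 + 1 = 2 * n + 5 from by omega] at h
      have habs45 : s(p (2 * n + 4), p (2 * n + 5)) ∉ (E.Gs t').edgeSet := by
        intro hmem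
        have hadj45 : (E.Gs t').Adj (p (2 * n + 4)) (p (2 * n + 5)) :=
          (SimpleGraph.mem_edgeSet _).mp hmem
        exact hne' (2 * n + 3) (2 * n + 5) (by omega) (by omega) (by omega)
          (neighbor_eq_of_deg_one hd4 hadj43 hadj45)
      obtain ⟨u, hut', hcu⟩ := edge_gone E ht'k.le (hMopt.1 hMopt45) habs45
      have hcu' : p (2 * n + 5) = E.sel u ∨ p (2 * n + 5) = E.oth u := by
        rcases hcu with h | h
        · exfalso
          have := matched_once E (by omega : u < E.k) ht'k h (Or.inl hsel'.1.symm)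
          omega
        · exact h
      refine ⟨t', u, ht'k, ht'i, ?_, ?_, hut', ?_⟩
      · rw [show 2 * (n + 1) + 2 = 2 * n + 4 from by omega]; exact hsel'.1
      · rw [show 2 * (n + 1) + 1 = 2 * n + 3 from by omega]; exact hsel'.2
      · rw [show 2 * (n + 1) + 3 = 2 * n + 5 from by omega]; exact hcu'
  obtain ⟨t, t', htk, hti, hsel_t, hoth_t, ht't, hq⟩ := chain (m - 1) (by omega)
  have hqq : p (2 * m + 1) = E.sel t' ∨ p (2 * m + 1) = E.oth t' := by
    rwa [show 2 * m + 1 = 2 * (m - 1) + 3 from by omega]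
  have hT : s(E.sel t', E.oth t') ∈ E.M := ⟨t', by omega, rfl⟩
  exact (hend _ hT).2 (Sym2.mem_iff.mpr hqq)

lemma isAugPath_reverse {M Mopt : Set (Sym2 V)} {m : ℕ} {p : ℕ → V}
    (hp : IsAugPath M Mopt m p) :
    IsAugPath M Mopt m (fun j => p (2 * m + 1 - j)) := by
  obtain ⟨hinj, hedge, hend⟩ := hp
  refine ⟨?_, ?_, ?_⟩
  · intro i hi j hj h
    have := hinj (2 * m + 1 - i) (by omega) (2 * m + 1 - j) (by omega) h
    omega
  · intro j hj
    have hkey : (s(p (2 * m + 1 - j), p (2 * m + 1 - (j + 1))) : Sym2 V) =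
        s(p (2 * m - j), p (2 * m - j + 1)) := by
      rw [Sym2.eq_swap]
      rw [show 2 * m + 1 - (j + 1) = 2 * m - j from by omega,
          show 2 * m + 1 - j = 2 * m - j + 1 from by omega]
    constructor
    · intro hpar
      simp only []
      rw [hkey]
      exact (hedge (2 * m - j) (by omega)).1 (by omega)
    · intro hpar
      simp only []
      rw [hkey]
      exact (hedge (2 * m - j) (by omega)).2 (by omega)
  · intro e he
    have h1 := (hend e he).1
    have h2 := (hend e he).2
    constructor
    · simpa using h2
    · simpa using h1

/-- every endpoint of an M-augmenting path is the target of at least one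
transfer; consequently every M-augmenting path X satisfies c_X ≥ 2. -/
theorem endpoint_credit {V : Type} [Fintype V] (G : SimpleGraph V)
    (E : GreedyExec V G) (h12 : E.Is12MinGreedy)
    (Mopt : Set (Sym2 V)) (hnf : NormalForm G E.M Mopt) :
    (∀ w : V, IsPathEndpoint E.M Mopt w → ∃ v : V, IsTransfer E E.M Mopt v w) ∧
    (∀ (m : ℕ) (p : ℕ → V), IsAugPath E.M Mopt m p →
      2 ≤ credits E E.M Mopt (pathSupp m p)) := by
  have hMopt : IsMatchingSet G Mopt := hnf.1.1
  have main : ∀ (m : ℕ) (p : ℕ → V), IsAugPath E.M Mopt m p →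
      (∃ v : V, IsTransfer E E.M Mopt v (p 0)) ∧
      (∃ v : V, IsTransfer E E.M Mopt v (p (2 * m + 1))) := by
    intro m p hp
    refine ⟨aug_path_transfer E h12 Mopt hMopt m p hp, ?_⟩
    have h2 := aug_path_transfer E h12 Mopt hMopt m _ (isAugPath_reverse hp)
    simpa using h2
  constructor
  · rintro w ⟨m, p, hp, hw | hw⟩
    · exact hw ▸ (main m p hp).1
    · exact hw ▸ (main m p hp).2
  · intro m p hp
    obtain ⟨⟨v1, h1⟩, ⟨v2, h2⟩⟩ := main m p hp
    have hne : p 0 ≠ p (2 * m + 1) := by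
      intro h
      have := hp.1 0 (by omega) (2 * m + 1) (by omega) h
      omega
    rw [credits]
    rw [show (2 : ℕ) = 1 + 1 from rfl]
    refine Nat.succ_le_of_lt ?_
    rw [Set.one_lt_ncard (Set.toFinite _)]
    refine ⟨(v1, p 0), ⟨h1, ⟨0, by simp, rfl⟩⟩, (v2, p (2 * m + 1)),
      ⟨h2, ⟨2 * m + 1, by simp, rfl⟩⟩, ?_⟩
    intro h
    exact hne (congrArg Prod.snd h)

end

end MinGreedy
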